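/- Suppose Assumption AC holds: there exist sos polynomials a_0, a_1,…,a_r, b_1,…,b_t and R > 0 with R − ‖[x]_d‖² = a_0 + ∑_i a_i f_i + ∑_j b_j h_j identically, deg(a_i f_i) ≤ 2d and deg(b_j h_j) ≤ 2d. Let k ≥ d and let y ∈ ℝ^{ℕ^n_{2k}} satisfy y_0 = 1, L_1^{(k)}[y] ⪰ 0, L_{f_i}^{(k)}[y] ⪰ 0 for all i, and L_{h_j}^{(k)}[y] ⪰ 0 for all j. Then ∑_{|β|≤d} y_{2β} ≤ R. -/
import Mathlib


open MvPolynomial Finsupp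

noncomputable section

/-- The total degree `|α|` of a multi-index `α ∈ ℕ^n`. -/
def mdeg {n : ℕ} (α : Fin n →₀ ℕ) : ℕ := ∑ i, α i

/-- `⌈m/2⌉` for a natural number `m`. -/
def halfCeil (m : ℕ) : ℕ := (m + 1) / 2

/-- The Riesz functional `R_y(f) = ∑_γ f_γ y_γ`. -/
def Riesz {n : ℕ} (y : (Fin n →₀ ℕ) → ℝ) (f : MvPolynomial (Fin n) ℝ) : ℝ :=
  ∑ γ ∈ f.support, f.coeff γ * y γ

/-- The `k`-th localizing matrix `L_f^{(k)}[y]`, indexed by multi-indices; its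
`(α,β)` entry is `∑_γ f_γ y_{α+β+γ}` when `|α|,|β| ≤ s := k - ⌈deg f / 2⌉` (and `0` otherwise). -/
def locMat {n : ℕ} (k : ℕ) (f : MvPolynomial (Fin n) ℝ) (y : (Fin n →₀ ℕ) → ℝ) :
    Matrix (Fin n →₀ ℕ) (Fin n →₀ ℕ) ℝ := fun α β =>
  if mdeg α ≤ k - halfCeil f.totalDegree ∧ mdeg β ≤ k - halfCeil f.totalDegree then
    ∑ γ ∈ f.support, f.coeff γ * y (α + β + γ)
  else 0

/-- Positive semidefiniteness of a (block-finitely supported) matrix indexed by multi-indices: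
symmetry together with nonnegativity of the quadratic form on all finitely supported vectors. -/
def IsPSD {n : ℕ} (M : Matrix (Fin n →₀ ℕ) (Fin n →₀ ℕ) ℝ) : Prop :=
  (∀ α β, M α β = M β α) ∧
  ∀ v : (Fin n →₀ ℕ) →₀ ℝ, 0 ≤ ∑ α ∈ v.support, ∑ β ∈ v.support, v α * M α β * v β

/-- The evaluation `u^α` of a monomial with multi-index `α` at a point `u`. -/
def monoEval {n : ℕ} (u : Fin n → ℝ) (α : Fin n →₀ ℕ) : ℝ := ∏ i, u i ^ α i

/-- The finite set of multi-indices `α ∈ ℕ^n` with `|α| ≤ D`. -/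
def degLE (n D : ℕ) : Finset (Fin n →₀ ℕ) :=
  (Finset.Iic (Finsupp.equivFunOnFinite.symm fun _ : Fin n => D)).filter fun α => mdeg α ≤ D

end

/-- A sum-of-squares (sos) polynomial. -/
def IsSos {n : ℕ} (σ : MvPolynomial (Fin n) ℝ) : Prop :=
  ∃ (L : ℕ) (p : Fin L → MvPolynomial (Fin n) ℝ), σ = ∑ l, p l ^ 2

/-- The polynomial `‖[x]_D‖² = ∑_{|β| ≤ D} x^{2β}`. -/
noncomputable def monVecSq (n D : ℕ) : MvPolynomial (Fin n) ℝ :=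
  ∑ β ∈ degLE n D, (MvPolynomial.monomial β (1 : ℝ)) ^ 2

-- ## auxiliary lemmas

lemma mdeg_eq_sum {n : ℕ} (α : Fin n →₀ ℕ) : mdeg α = α.sum fun _ e => e := by
  rw [Finsupp.sum, mdeg]
  exact (Finset.sum_subset (Finset.subset_univ _)
    (fun i _ hi => Finsupp.notMem_support_iff.mp hi)).symm

lemma mdeg_eq_degree {n : ℕ} (α : Fin n →₀ ℕ) : mdeg α = Finsupp.degree α :=
  mdeg_eq_sum α

lemma mdeg_add {n : ℕ} (α β : Fin n →₀ ℕ) : mdeg (α + β) = mdeg α + mdeg β := by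
  simp [mdeg, Finset.sum_add_distrib]

lemma mdeg_le_totalDegree {n : ℕ} {p : MvPolynomial (Fin n) ℝ} {α : Fin n →₀ ℕ}
    (h : α ∈ p.support) : mdeg α ≤ p.totalDegree := by
  rw [mdeg_eq_sum]; exact MvPolynomial.le_totalDegree h

section riesz
variable {n : ℕ} (y : (Fin n →₀ ℕ) → ℝ)

lemma Riesz_eq_sum_of_subset {f : MvPolynomial (Fin n) ℝ} {S : Finset (Fin n →₀ ℕ)}
    (hS : f.support ⊆ S) : Riesz y f = ∑ γ ∈ S, f.coeff γ * y γ :=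
  Finset.sum_subset hS (fun γ _ hγ => by
    rw [MvPolynomial.notMem_support_iff.mp hγ, zero_mul])

@[simp] lemma Riesz_zero : Riesz y 0 = 0 := by simp [Riesz]

lemma Riesz_add (f g : MvPolynomial (Fin n) ℝ) :
    Riesz y (f + g) = Riesz y f + Riesz y g := by
  classical
  rw [Riesz_eq_sum_of_subset y (MvPolynomial.support_add : (f + g).support ⊆ _),
    Riesz_eq_sum_of_subset y (Finset.subset_union_left (s₂ := g.support)),
    Riesz_eq_sum_of_subset y (Finset.subset_union_right (s₁ := f.support)),
    ← Finset.sum_add_distrib]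
  exact Finset.sum_congr rfl fun γ _ => by rw [MvPolynomial.coeff_add, add_mul]

lemma Riesz_sum {ι : Type*} (s : Finset ι) (F : ι → MvPolynomial (Fin n) ℝ) :
    Riesz y (∑ i ∈ s, F i) = ∑ i ∈ s, Riesz y (F i) := by
  classical
  induction s using Finset.cons_induction with
  | empty => simp
  | cons i s hi ih => rw [Finset.sum_cons, Finset.sum_cons, Riesz_add, ih]

lemma Riesz_neg (f : MvPolynomial (Fin n) ℝ) : Riesz y (-f) = -Riesz y f := by
  simp [Riesz, MvPolynomial.support_neg, Finset.sum_neg_distrib]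

lemma Riesz_sub (f g : MvPolynomial (Fin n) ℝ) :
    Riesz y (f - g) = Riesz y f - Riesz y g := by
  rw [sub_eq_add_neg, Riesz_add, Riesz_neg, sub_eq_add_neg]

lemma Riesz_monomial (τ : Fin n →₀ ℕ) (c : ℝ) :
    Riesz y (MvPolynomial.monomial τ c) = c * y τ := by
  by_cases hc : c = 0
  · simp [hc, Riesz]
  · rw [Riesz]
    rw [MvPolynomial.support_monomial, if_neg hc]
    simp [MvPolynomial.coeff_monomial]

lemma Riesz_mul_mul (p q F : MvPolynomial (Fin n) ℝ) :
    Riesz y (p * q * F) = ∑ α ∈ p.support, ∑ β ∈ q.support, ∑ γ ∈ F.support,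
      p.coeff α * q.coeff β * F.coeff γ * y (α + β + γ) := by
  conv_lhs => rw [MvPolynomial.as_sum p, MvPolynomial.as_sum q, MvPolynomial.as_sum F]
  simp only [Finset.sum_mul, Finset.mul_sum, MvPolynomial.monomial_mul]
  simp only [Riesz_sum, Riesz_monomial]
  rw [Finset.sum_comm]
  refine (Finset.sum_congr rfl fun β _ => Finset.sum_comm).trans ?_
  rw [Finset.sum_comm]

end riesz

-- quadratic form positivity
lemma riesz_sq_mul_nonneg {n k : ℕ} (y : (Fin n →₀ ℕ) → ℝ) (F p : MvPolynomial (Fin n) ℝ)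
    (hpsd : IsPSD (locMat k F y))
    (hdeg : p.totalDegree ≤ k - halfCeil F.totalDegree) :
    0 ≤ Riesz y (p ^ 2 * F) := by
  classical
  set v : (Fin n →₀ ℕ) →₀ ℝ :=
    ⟨p.support, fun α => p.coeff α, fun a => MvPolynomial.mem_support_iff⟩ with hv
  have h2 := hpsd.2 v
  have hvs : v.support = p.support := rfl
  have hva : ∀ α, v α = p.coeff α := fun α => rfl
  rw [hvs] at h2
  have key : Riesz y (p ^ 2 * F) =
      ∑ α ∈ p.support, ∑ β ∈ p.support, v α * locMat k F y α β * v β := by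
    rw [pow_two, Riesz_mul_mul]
    refine Finset.sum_congr rfl fun α hα => Finset.sum_congr rfl fun β hβ => ?_
    rw [hva, hva, locMat, if_pos ⟨le_trans (mdeg_le_totalDegree hα) hdeg,
      le_trans (mdeg_le_totalDegree hβ) hdeg⟩, Finset.mul_sum, Finset.sum_mul]
    refine Finset.sum_congr rfl fun γ hγ => ?_
    ring
  rw [key]; exact h2

lemma coeff_eq_zero_of_lt_mdeg {n : ℕ} {p : MvPolynomial (Fin n) ℝ} {d : Fin n →₀ ℕ}
    (h : p.totalDegree < mdeg d) : MvPolynomial.coeff d p = 0 := by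
  apply MvPolynomial.coeff_eq_zero_of_totalDegree_lt
  have : mdeg d = ∑ i ∈ d.support, d i := mdeg_eq_degree d
  omega

lemma coeff_mul_top {n : ℕ} (p q : MvPolynomial (Fin n) ℝ) (aD bD : ℕ)
    (hp : p.totalDegree ≤ aD) (hq : q.totalDegree ≤ bD) (γ : Fin n →₀ ℕ)
    (hγ : mdeg γ = aD + bD) :
    MvPolynomial.coeff γ (p * q) =
      MvPolynomial.coeff γ (homogeneousComponent aD p * homogeneousComponent bD q) := by
  rw [MvPolynomial.coeff_mul, MvPolynomial.coeff_mul]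
  refine Finset.sum_congr rfl fun x hx => ?_
  have hab : x.1 + x.2 = γ := Finset.HasAntidiagonal.mem_antidiagonal.mp hx
  have hsum : mdeg x.1 + mdeg x.2 = aD + bD := by rw [← mdeg_add, hab, hγ]
  rw [coeff_homogeneousComponent, coeff_homogeneousComponent,
    ← mdeg_eq_degree, ← mdeg_eq_degree]
  rcases lt_trichotomy (mdeg x.1) aD with h1 | h1 | h1
  · have h2 : q.totalDegree < mdeg x.2 := by omega
    simp [coeff_eq_zero_of_lt_mdeg h2]
  · have h2 : mdeg x.2 = bD := by omega
    rw [if_pos h1, if_pos h2]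
  · have h2 : p.totalDegree < mdeg x.1 := by omega
    simp [coeff_eq_zero_of_lt_mdeg h2]

lemma homogeneousComponent_totalDegree_ne_zero {n : ℕ} {p : MvPolynomial (Fin n) ℝ}
    (hp : p ≠ 0) : homogeneousComponent p.totalDegree p ≠ 0 := by
  obtain ⟨γ, hγs, hγ⟩ := Finset.exists_mem_eq_sup p.support
    (MvPolynomial.support_nonempty.mpr hp) (fun s => s.sum fun _ e => e)
  intro h0
  have hcg := congrArg (MvPolynomial.coeff γ) h0
  rw [coeff_homogeneousComponent, if_pos, MvPolynomial.coeff_zero] at hcg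
  · exact MvPolynomial.mem_support_iff.mp hγs hcg
  · rw [← mdeg_eq_degree, mdeg_eq_sum]
    exact hγ.symm

lemma totalDegree_mul_eq {n : ℕ} {p q : MvPolynomial (Fin n) ℝ} (hp : p ≠ 0) (hq : q ≠ 0) :
    (p * q).totalDegree = p.totalDegree + q.totalDegree := by
  refine le_antisymm (MvPolynomial.totalDegree_mul p q) ?_
  set P := homogeneousComponent p.totalDegree p
  set Q := homogeneousComponent q.totalDegree q
  have hPQ : P * Q ≠ 0 := mul_ne_zero (homogeneousComponent_totalDegree_ne_zero hp)
    (homogeneousComponent_totalDegree_ne_zero hq)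
  obtain ⟨γ, hγ⟩ := MvPolynomial.support_nonempty.mpr hPQ
  have hhom : (P * Q).IsHomogeneous (p.totalDegree + q.totalDegree) :=
    (MvPolynomial.homogeneousComponent_isHomogeneous _ _).mul
      (MvPolynomial.homogeneousComponent_isHomogeneous _ _)
  have hdeg : Finsupp.degree γ = p.totalDegree + q.totalDegree := by
    by_contra hne
    exact MvPolynomial.mem_support_iff.mp hγ (hhom.coeff_eq_zero hne)
  have hc : MvPolynomial.coeff γ (p * q) ≠ 0 := by
    rw [coeff_mul_top p q _ _ le_rfl le_rfl γ (by rw [mdeg_eq_degree]; exact hdeg)]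
    exact MvPolynomial.mem_support_iff.mp hγ
  calc p.totalDegree + q.totalDegree = mdeg γ := by rw [mdeg_eq_degree, hdeg]
    _ ≤ (p * q).totalDegree := mdeg_le_totalDegree (MvPolynomial.mem_support_iff.mpr hc)

lemma sos_two_mul_deg_le {n L : ℕ} (p : Fin L → MvPolynomial (Fin n) ℝ) (l : Fin L) :
    2 * (p l).totalDegree ≤ (∑ i, p i ^ 2).totalDegree := by
  by_contra hcon
  push_neg at hcon
  set σ' := ∑ i, p i ^ 2 with hσ'
  set D := Finset.univ.sup fun i => (p i).totalDegree with hD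
  have hlD : (p l).totalDegree ≤ D := by
    rw [hD]; exact Finset.le_sup (f := fun i => (p i).totalDegree) (Finset.mem_univ l)
  have hσD : σ'.totalDegree < 2 * D := by omega
  obtain ⟨l₀, -, hl₀⟩ := Finset.exists_mem_eq_sup Finset.univ ⟨l, Finset.mem_univ l⟩
    (fun i => (p i).totalDegree)
  have hDpos : 0 < D := by omega
  have hp0 : p l₀ ≠ 0 := by
    intro h
    rw [h, MvPolynomial.totalDegree_zero] at hl₀
    omega
  have hiD : ∀ i, (p i).totalDegree ≤ D := fun i => by
    rw [hD]; exact Finset.le_sup (f := fun i => (p i).totalDegree) (Finset.mem_univ i)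
  set q := fun i => homogeneousComponent D (p i) with hqdef
  have key : (∑ i, q i ^ 2) = 0 := by
    apply MvPolynomial.ext
    intro γ
    rw [MvPolynomial.coeff_zero]
    by_cases hγ : Finsupp.degree γ = 2 * D
    · have e1 : MvPolynomial.coeff γ (∑ i, q i ^ 2) = MvPolynomial.coeff γ σ' := by
        rw [hσ', MvPolynomial.coeff_sum, MvPolynomial.coeff_sum]
        refine Finset.sum_congr rfl fun i _ => ?_
        rw [pow_two, pow_two, hqdef]
        exact (coeff_mul_top (p i) (p i) D D (hiD i) (hiD i) γ
          (by rw [mdeg_eq_degree, hγ]; omega)).symm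
      rw [e1]
      exact coeff_eq_zero_of_lt_mdeg (by rw [mdeg_eq_degree, hγ]; omega)
    · have hhom : (∑ i, q i ^ 2).IsHomogeneous (2 * D) := by
        refine MvPolynomial.IsHomogeneous.sum _ _ _ fun i _ => ?_
        rw [pow_two, two_mul]
        exact (MvPolynomial.homogeneousComponent_isHomogeneous D (p i)).mul
          (MvPolynomial.homogeneousComponent_isHomogeneous D (p i))
      exact hhom.coeff_eq_zero hγ
  have hq0 : q l₀ = 0 := by
    apply MvPolynomial.funext
    intro x
    rw [map_zero]
    have hx : ∑ i, (MvPolynomial.eval x) (q i) ^ 2 = 0 := by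
      have := congrArg (MvPolynomial.eval x) key
      simpa [map_sum] using this
    have h0 := (Finset.sum_eq_zero_iff_of_nonneg
      (fun i _ => sq_nonneg ((MvPolynomial.eval x) (q i)))).mp hx l₀ (Finset.mem_univ l₀)
    exact pow_eq_zero_iff (two_ne_zero) |>.mp h0
  have hfin : homogeneousComponent (p l₀).totalDegree (p l₀) = 0 := by rw [← hl₀]; exact hq0
  exact homogeneousComponent_totalDegree_ne_zero hp0 hfin

lemma riesz_sos_mul_nonneg {n k : ℕ} (y : (Fin n →₀ ℕ) → ℝ) (F σ' : MvPolynomial (Fin n) ℝ)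
    (hσ : IsSos σ') (hpsd : IsPSD (locMat k F y)) (hdeg : (σ' * F).totalDegree ≤ 2 * k) :
    0 ≤ Riesz y (σ' * F) := by
  obtain ⟨L, p, rfl⟩ := hσ
  rcases eq_or_ne F 0 with rfl | hF
  · simp
  rcases eq_or_ne (∑ l, p l ^ 2) 0 with h0 | h0
  · rw [h0, zero_mul, Riesz_zero]
  rw [totalDegree_mul_eq h0 hF] at hdeg
  rw [Finset.sum_mul, Riesz_sum]
  refine Finset.sum_nonneg fun l _ => ?_
  refine riesz_sq_mul_nonneg y F (p l) hpsd ?_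
  have h2 := sos_two_mul_deg_le p l
  have : halfCeil F.totalDegree = (F.totalDegree + 1) / 2 := rfl
  omega


/-- Under Assumption AC, for `k ≥ d` and any `y` feasible for the order-`k`
moment relaxation (`y_0 = 1` with moment and all localizing matrices PSD), one has
`∑_{|β|≤d} y_{2β} ≤ R`. -/
theorem moment_sum_bounded_of_AC {n m r t : ℕ}
    (f : Fin r → MvPolynomial (Fin n) ℝ) (g : Fin t → MvPolynomial (Fin m) ℝ)
    (A : Matrix (Fin m) (Fin n) ℝ)
    (h : Fin t → MvPolynomial (Fin n) ℝ)
    (hh : ∀ j, h j = MvPolynomial.aeval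
      (fun i : Fin m => ∑ l : Fin n, MvPolynomial.C (A i l) * MvPolynomial.X l) (g j))
    (d : ℕ)
    (hd : d = max (Finset.univ.sup fun i => halfCeil (f i).totalDegree)
                  (Finset.univ.sup fun j => halfCeil (h j).totalDegree))
    -- Assumption AC:
    (Rv : ℝ) (hR : 0 < Rv)
    (a₀ : MvPolynomial (Fin n) ℝ) (a : Fin r → MvPolynomial (Fin n) ℝ)
    (b : Fin t → MvPolynomial (Fin n) ℝ)
    (ha₀ : IsSos a₀) (ha : ∀ i, IsSos (a i)) (hb : ∀ j, IsSos (b j))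
    (hda : ∀ i, (a i * f i).totalDegree ≤ 2 * d)
    (hdb : ∀ j, (b j * h j).totalDegree ≤ 2 * d)
    (hcert : MvPolynomial.C Rv - monVecSq n d = a₀ + ∑ i, a i * f i + ∑ j, b j * h j)
    -- a feasible point of the order-k moment relaxation:
    (k : ℕ) (hk : d ≤ k) (y : (Fin n →₀ ℕ) → ℝ) (hy0 : y 0 = 1)
    (hmom : IsPSD (locMat k (1 : MvPolynomial (Fin n) ℝ) y))
    (hlf : ∀ i, IsPSD (locMat k (f i) y))
    (hlh : ∀ j, IsPSD (locMat k (h j) y)) :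
    (∑ β ∈ degLE n d, y (β + β)) ≤ Rv := by
    classical
  have hmv : (monVecSq n d).totalDegree ≤ 2 * d := by
    refine le_trans (MvPolynomial.totalDegree_finset_sum _ _) (Finset.sup_le fun β hβ => ?_)
    have hβd : mdeg β ≤ d := (Finset.mem_filter.mp hβ).2
    rw [pow_two, MvPolynomial.monomial_mul,
      MvPolynomial.totalDegree_monomial _ (by norm_num : (1 : ℝ) * 1 ≠ 0), ← mdeg_eq_sum,
      mdeg_add]
    omega
  have hsum_a : (∑ i, a i * f i).totalDegree ≤ 2 * d :=
    le_trans (MvPolynomial.totalDegree_finset_sum _ _) (Finset.sup_le fun i _ => hda i)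
  have hsum_b : (∑ j, b j * h j).totalDegree ≤ 2 * d :=
    le_trans (MvPolynomial.totalDegree_finset_sum _ _) (Finset.sup_le fun j _ => hdb j)
  have hdeg0 : a₀.totalDegree ≤ 2 * d := by
    have ha0eq : a₀ = (MvPolynomial.C Rv - monVecSq n d) - (∑ i, a i * f i)
        - ∑ j, b j * h j := by
      rw [hcert]; ring
    rw [ha0eq]
    refine le_trans (MvPolynomial.totalDegree_sub _ _) (max_le ?_ hsum_b)
    refine le_trans (MvPolynomial.totalDegree_sub _ _) (max_le ?_ hsum_a)
    refine le_trans (MvPolynomial.totalDegree_sub _ _) (max_le ?_ hmv)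
    simp [MvPolynomial.totalDegree_C]
  have hL : Riesz y (MvPolynomial.C Rv - monVecSq n d)
      = Rv - ∑ β ∈ degLE n d, y (β + β) := by
    rw [Riesz_sub]
    congr 1
    · rw [MvPolynomial.C_apply, Riesz_monomial, hy0, mul_one]
    · rw [monVecSq, Riesz_sum]
      refine Finset.sum_congr rfl fun β _ => ?_
      rw [pow_two, MvPolynomial.monomial_mul, one_mul, Riesz_monomial, one_mul]
  have hnn0 : 0 ≤ Riesz y a₀ := by
    have h1 := riesz_sos_mul_nonneg y 1 a₀ ha₀ hmom (by rw [mul_one]; omega)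
    rwa [mul_one] at h1
  have hnna : ∀ i, 0 ≤ Riesz y (a i * f i) := fun i =>
    riesz_sos_mul_nonneg y (f i) (a i) (ha i) (hlf i) (le_trans (hda i) (by omega))
  have hnnb : ∀ j, 0 ≤ Riesz y (b j * h j) := fun j =>
    riesz_sos_mul_nonneg y (h j) (b j) (hb j) (hlh j) (le_trans (hdb j) (by omega))
  have hkey := congrArg (Riesz y) hcert
  rw [hL, Riesz_add, Riesz_add, Riesz_sum, Riesz_sum] at hkey
  have hpos : 0 ≤ Riesz y a₀ + ∑ i, Riesz y (a i * f i) + ∑ j, Riesz y (b j * h j) :=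
    add_nonneg (add_nonneg hnn0 (Finset.sum_nonneg fun i _ => hnna i))
      (Finset.sum_nonneg fun j _ => hnnb j)
  linarith
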